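/- Let G be a finite simple graph without isolated vertices and let D be an optimal dominating set in G. If v ∈ D is not an isolated vertex of the induced subgraph G[D], then v has at least 2 private neighbors with respect to D. -/

import Mathlib

/-- `D` is a dominating set of `G`: every vertex lies in `D` or has a neighbor in `D`. -/
def IsDomSet {V : Type*} (G : SimpleGraph V) (D : Set V) : Prop :=
  ∀ v : V, v ∈ D ∨ ∃ u ∈ D, G.Adj u v

/-- `S` is an independent set of `G`. -/
def IsIndep {V : Type*} (G : SimpleGraph V) (S : Set V) : Prop :=
  S.Pairwise fun u v => ¬ G.Adj u v

/-- The domination number of `G`: the minimum size of a dominating set. -/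
noncomputable def gamma {V : Type*} (G : SimpleGraph V) : ℕ :=
  sInf {n | ∃ D : Set V, IsDomSet G D ∧ D.ncard = n}

/-- The independence number of `G`: the maximum size of an independent set. -/
noncomputable def alpha {V : Type*} (G : SimpleGraph V) : ℕ :=
  sSup {n | ∃ S : Set V, IsIndep G S ∧ S.ncard = n}

/-- The inverse domination number of `G`: the minimum size of a dominating set
disjoint from some minimum dominating set. -/
noncomputable def invGamma {V : Type*} (G : SimpleGraph V) : ℕ :=
  sInf {n | ∃ D T : Set V, IsDomSet G D ∧ D.ncard = gamma G ∧
    IsDomSet G T ∧ D ∩ T = ∅ ∧ T.ncard = n}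

/-- The independence number of the subgraph of `G` induced by `D`. -/
noncomputable def alphaOn {V : Type*} (G : SimpleGraph V) (D : Set V) : ℕ :=
  sSup {n | ∃ S : Set V, S ⊆ D ∧ IsIndep G S ∧ S.ncard = n}

/-- The number of edges of the subgraph of `G` induced by `D`. -/
noncomputable def edgeCountOn {V : Type*} (G : SimpleGraph V) (D : Set V) : ℕ :=
  {e ∈ G.edgeSet | ∀ v ∈ e, v ∈ D}.ncard

/-- `D` is an optimal dominating set: of minimum size; among those, `G[D]` has
maximum independence number; and subject to that, `G[D]` has fewest edges. -/
def IsOptimalDomSet {V : Type*} (G : SimpleGraph V) (D : Set V) : Prop :=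
  IsDomSet G D ∧ D.ncard = gamma G ∧
  (∀ D' : Set V, IsDomSet G D' → D'.ncard = gamma G → alphaOn G D' ≤ alphaOn G D) ∧
  (∀ D' : Set V, IsDomSet G D' → D'.ncard = gamma G →
    alphaOn G D' = alphaOn G D → edgeCountOn G D ≤ edgeCountOn G D')

/-- `w` is a private neighbor of `v` with respect to `D`: `w ∉ D` and `N(w) ∩ D = {v}`. -/
def IsPrivateNbr {V : Type*} (G : SimpleGraph V) (D : Set V) (v w : V) : Prop :=
  w ∉ D ∧ G.Adj v w ∧ ∀ u ∈ D, G.Adj u w → u = v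

/-- `R` is a partial independent set of representatives (partial ISR) for the family `P`:
an independent set consisting of distinct representatives of some subfamily of `P`. -/
def IsPartialISR {V : Type*} (G : SimpleGraph V) {n : ℕ} (P : Fin n → Set V)
    (R : Set V) : Prop :=
  IsIndep G R ∧ ∃ (J : Set (Fin n)) (x : Fin n → V),
    Set.InjOn x J ∧ (∀ j ∈ J, x j ∈ P j) ∧ R = x '' J

/-- `b(G)`: the largest number of vertices of an induced bipartite subgraph of `G`. -/
noncomputable def bipNum {V : Type*} (G : SimpleGraph V) : ℕ :=
  sSup {n | ∃ B A : Set V, A ⊆ B ∧ IsIndep G A ∧ IsIndep G (B \ A) ∧ B.ncard = n}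

theorem two_private_neighbors {V : Type*} [Fintype V] (G : SimpleGraph V)
    (hiso : ∀ v : V, ∃ u, G.Adj v u)
    (D : Set V) (hopt : IsOptimalDomSet G D)
    (v : V) (hv : v ∈ D) (hviso : ∃ u ∈ D, G.Adj v u) :
    2 ≤ {w : V | IsPrivateNbr G D v w}.ncard := by
  classical
  by_contra h2
  push_neg at h2
  set P := {w : V | IsPrivateNbr G D v w} with hPdef
  obtain ⟨hdom, hγ, hα, hE⟩ := hopt
  obtain ⟨u, hu, huv⟩ := hviso
  have hune : u ≠ v := fun h => G.irrefl (h ▸ huv)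
  have hDfin : D.Finite := Set.toFinite D
  have hgammale : ∀ T : Set V, IsDomSet G T → gamma G ≤ T.ncard :=
    fun T hT => Nat.sInf_le ⟨T, hT, rfl⟩
  have hDpos : 1 ≤ D.ncard := (Set.ncard_pos hDfin).mpr ⟨v, hv⟩
  have hdom' : ∀ x, x ∉ D → x ∉ P → ∃ u' ∈ D, u' ≠ v ∧ G.Adj u' x := by
    intro x hx hxP
    rcases hdom x with h | ⟨u', hu', hadj⟩
    · exact absurd h hx
    · by_cases hu'v : u' = v
      · subst hu'v
        by_contra hcon
        push_neg at hcon
        exact hxP ⟨hx, hadj, fun a ha hadja => by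
          by_contra hav
          exact (hcon a ha hav) hadja⟩
      · exact ⟨u', hu', hu'v, hadj⟩
  have hPfin : P.Finite := Set.toFinite P
  interval_cases h : P.ncard
  · -- no private neighbor: D \ {v} is dominating, contradicting minimality
    have hPempty : P = ∅ := (Set.ncard_eq_zero hPfin).mp h
    have hdd : IsDomSet G (D \ {v}) := by
      intro x
      by_cases hxD : x ∈ D \ {v}
      · exact Or.inl hxD
      · right
        by_cases hxv : x = v
        · exact ⟨u, ⟨hu, hune⟩, hxv ▸ huv.symm⟩
        · have hxnD : x ∉ D := fun hxDmem => hxD ⟨hxDmem, hxv⟩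
          have hxnP : x ∉ P := by rw [hPempty]; exact Set.notMem_empty x
          obtain ⟨u', hu', hu'v, hadj⟩ := hdom' x hxnD hxnP
          exact ⟨u', ⟨hu', hu'v⟩, hadj⟩
    have h1 : gamma G ≤ (D \ {v}).ncard := hgammale _ hdd
    have h2' : (D \ {v}).ncard = D.ncard - 1 := Set.ncard_diff_singleton_of_mem hv
    omega
  · -- exactly one private neighbor w: swap v for w
    obtain ⟨w, hPw⟩ := (Set.ncard_eq_one).mp h
    have hw : IsPrivateNbr G D v w := by
      have : w ∈ P := hPw ▸ Set.mem_singleton w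
      exact this
    obtain ⟨hwD, hadjvw, hpriv⟩ := hw
    set D' : Set V := insert w (D \ {v}) with hD'def
    have hvw : v ≠ w := fun hh => hwD (hh ▸ hv)
    have hvD' : v ∉ D' := by
      intro hmem
      rcases hmem with hh | hh
      · exact hvw hh
      · exact hh.2 rfl
    have hdomD' : IsDomSet G D' := by
      intro x
      by_cases hxD' : x ∈ D'
      · exact Or.inl hxD'
      · right
        by_cases hxv : x = v
        · exact ⟨w, Set.mem_insert _ _, hxv ▸ hadjvw.symm⟩
        · have hxnD : x ∉ D := fun hxDmem => hxD' (Set.mem_insert_of_mem _ ⟨hxDmem, hxv⟩)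
          have hxnP : x ∉ P := by
            intro hxP
            rw [hPw] at hxP
            exact hxD' (hxP ▸ Set.mem_insert _ _)
          obtain ⟨u', hu', hu'v, hadj⟩ := hdom' x hxnD hxnP
          exact ⟨u', Set.mem_insert_of_mem _ ⟨hu', hu'v⟩, hadj⟩
    have hwnDv : w ∉ D \ {v} := fun hh => hwD hh.1
    have hDvfin : (D \ {v}).Finite := hDfin.subset (Set.diff_subset)
    have hcard' : D'.ncard = gamma G := by
      rw [hD'def, Set.ncard_insert_of_notMem hwnDv hDvfin,
        Set.ncard_diff_singleton_of_mem hv]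
      omega
    -- alphaOn G D ≤ alphaOn G D'
    have hbdd : ∀ S : Set V, BddAbove {n | ∃ T : Set V, T ⊆ S ∧ IsIndep G T ∧ T.ncard = n} := by
      intro S
      refine ⟨Nat.card V, fun n hn => ?_⟩
      obtain ⟨T, _, _, hT⟩ := hn
      rw [← hT, ← Set.ncard_univ]
      exact Set.ncard_le_ncard (Set.subset_univ T) (Set.toFinite _)
    have hne : ({n | ∃ T : Set V, T ⊆ D ∧ IsIndep G T ∧ T.ncard = n} : Set ℕ).Nonempty :=
      ⟨0, ∅, Set.empty_subset D, Set.pairwise_empty _, Set.ncard_empty V⟩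
    have hach : ∃ S, S ⊆ D ∧ IsIndep G S ∧ S.ncard = alphaOn G D :=
      Nat.sSup_mem hne (hbdd D)
    obtain ⟨S, hSD, hSind, hScard⟩ := hach
    have halphage : alphaOn G D ≤ alphaOn G D' := by
      by_cases hvS : v ∈ S
      · -- swap v for w in S
        set S' : Set V := insert w (S \ {v}) with hS'def
        have hwnSv : w ∉ S \ {v} := fun hh => hwD (hSD hh.1)
        have hS'sub : S' ⊆ D' := by
          intro x hx
          rcases hx with hh | hh
          · exact hh ▸ Set.mem_insert _ _
          · exact Set.mem_insert_of_mem _ ⟨hSD hh.1, hh.2⟩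
        have hS'ind : IsIndep G S' := by
          intro a ha b hb hab
          rcases ha with ha | ha <;> rcases hb with hb | hb
          · exact absurd (ha.trans hb.symm) hab
          · subst ha
            intro hadj
            exact hb.2 (hpriv b (hSD hb.1) hadj.symm)
          · subst hb
            intro hadj
            exact ha.2 (hpriv a (hSD ha.1) hadj)
          · exact hSind ha.1 hb.1 hab
        have hS'card : S'.ncard = alphaOn G D := by
          rw [hS'def, Set.ncard_insert_of_notMem hwnSv (Set.toFinite _),
            Set.ncard_diff_singleton_of_mem hvS, hScard]
          have : 1 ≤ S.ncard := (Set.ncard_pos (Set.toFinite S)).mpr ⟨v, hvS⟩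
          omega
        exact le_csSup (hbdd D') ⟨S', hS'sub, hS'ind, hS'card⟩
      · have hSsub : S ⊆ D' := fun x hx =>
          Set.mem_insert_of_mem _ ⟨hSD hx, fun hh => hvS (hh ▸ hx)⟩
        exact le_csSup (hbdd D') ⟨S, hSsub, hSind, hScard⟩
    have halpha' : alphaOn G D' = alphaOn G D :=
      le_antisymm (hα D' hdomD' hcard') halphage
    -- edge count strictly decreases
    have hEsub : {e ∈ G.edgeSet | ∀ x ∈ e, x ∈ D'} ⊂ {e ∈ G.edgeSet | ∀ x ∈ e, x ∈ D} := by
      constructor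
      · rintro e ⟨he, hmem⟩
        refine ⟨he, fun x hx => ?_⟩
        have hxD' := hmem x hx
        rcases hxD' with hh | hh
        · -- x = w is impossible: the other endpoint would be v
          exfalso
          subst hh
          induction e using Sym2.ind with
          | _ a b =>
            have hadj : G.Adj a b := he
            rcases Sym2.mem_iff.mp hx with rfl | rfl
            · have hbD' := hmem b (Sym2.mem_mk_right _ _)
              rcases hbD' with hb | hb
              · exact G.irrefl (hb ▸ hadj)
              · exact hb.2 (hpriv b hb.1 hadj.symm)
            · have haD' := hmem a (Sym2.mem_mk_left _ _)
              rcases haD' with ha | ha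
              · exact G.irrefl (ha ▸ hadj)
              · exact ha.2 (hpriv a ha.1 hadj)
        · exact hh.1
      · intro hsub
        have : s(v, u) ∈ {e ∈ G.edgeSet | ∀ x ∈ e, x ∈ D} := by
          refine ⟨huv, fun x hx => ?_⟩
          rcases Sym2.mem_iff.mp hx with rfl | rfl
          · exact hv
          · exact hu
        have hmem' := hsub this
        exact hvD' (hmem'.2 v (Sym2.mem_mk_left v u))
    have hElt : edgeCountOn G D' < edgeCountOn G D :=
      Set.ncard_lt_ncard hEsub (Set.toFinite _)
    have := hE D' hdomD' hcard' halpha'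
    unfold edgeCountOn at hElt
    unfold edgeCountOn at this
    omega
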